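/- For any finite set system S there exists a simplicial complex C (a set system closed under taking subsets) with |C| = |S| and f_C(m) ≤ f_S(m) for every integer m ≥ 0. -/

import Mathlib

/-- The shatter function of a set system `S` on the finite ground set `X`:
`f_S(m) = max { |{e ∩ Y : e ∈ S}| : Y ⊆ X, |Y| = m }`. -/
def shatter {X : Type*} [DecidableEq X] [Fintype X]
    (S : Finset (Finset X)) (m : ℕ) : ℕ :=
  (Finset.univ.powersetCard m).sup (fun Y => (S.image (· ∩ Y)).card)

section Aux
open Finset FinsetFamily


variable {X : Type*} [DecidableEq X]

lemma trace_compression_subset_of_mem (a : X) (S : Finset (Finset X)) {Y : Finset X} (ha : a ∈ Y) :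
    (𝓓 a S).image (· ∩ Y) ⊆ 𝓓 a (S.image (· ∩ Y)) := by
  intro t ht
  obtain ⟨u, hu, rfl⟩ := mem_image.1 ht
  rw [Down.mem_compression] at hu ⊢
  rcases hu with ⟨h1, h2⟩ | ⟨h1, h2⟩
  · refine Or.inl ⟨mem_image_of_mem _ h1, ?_⟩
    rw [← erase_inter]
    exact mem_image_of_mem _ h2
  · have haU : a ∉ u := fun h => h1 (by rwa [insert_eq_of_mem h] at h2)
    by_cases hT : u ∩ Y ∈ S.image (· ∩ Y)
    · refine Or.inl ⟨hT, ?_⟩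
      rwa [erase_eq_of_notMem (fun h => haU (mem_inter.1 h).1)]
    · refine Or.inr ⟨hT, ?_⟩
      rw [← insert_inter_of_mem ha]
      exact mem_image_of_mem _ h2

lemma trace_compression_card_le (a : X) (S : Finset (Finset X)) (Y : Finset X) :
    ((𝓓 a S).image (· ∩ Y)).card ≤ (S.image (· ∩ Y)).card := by
  by_cases ha : a ∈ Y
  · calc ((𝓓 a S).image (· ∩ Y)).card ≤ (𝓓 a (S.image (· ∩ Y))).card :=
        card_le_card (trace_compression_subset_of_mem a S ha)
      _ = _ := Down.card_compression _ _
  · apply card_le_card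
    intro t ht
    obtain ⟨u, hu, rfl⟩ := mem_image.1 ht
    rw [Down.mem_compression] at hu
    rcases hu with ⟨h1, _⟩ | ⟨_, h2⟩
    · exact mem_image_of_mem _ h1
    · have : u ∩ Y = insert a u ∩ Y := by
        rw [insert_inter_of_notMem ha]
      rw [this]
      exact mem_image_of_mem _ h2

lemma sum_compression_lt {a : X} {S : Finset (Finset X)} {s : Finset X}
    (hs : s ∈ S) (has : a ∈ s) (hes : s.erase a ∉ S) :
    ∑ t ∈ 𝓓 a S, #t < ∑ t ∈ S, #t := by
  have hB : {t ∈ S.image (fun s => erase s a) | t ∉ S}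
      = ({s ∈ S | erase s a ∉ S}).image (fun s => erase s a) := by
    ext t
    simp only [mem_filter, mem_image]
    constructor
    · rintro ⟨⟨u, hu, rfl⟩, h2⟩
      exact ⟨u, ⟨hu, h2⟩, rfl⟩
    · rintro ⟨u, ⟨hu, h2⟩, rfl⟩
      exact ⟨⟨u, hu, rfl⟩, h2⟩
  have key : ∑ t ∈ 𝓓 a S, #t
      = ∑ t ∈ {s ∈ S | erase s a ∈ S}, #t
        + ∑ t ∈ ({s ∈ S | erase s a ∉ S}), #(erase t a) := by
    rw [Down.compression, sum_disjUnion, hB, sum_image]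
    intro x hx y hy hxy
    simp only [mem_coe, mem_filter] at hx hy
    have hax : a ∈ x := by
      by_contra h
      exact hx.2 (by rw [erase_eq_of_notMem h]; exact hx.1)
    have hay : a ∈ y := by
      by_contra h
      exact hy.2 (by rw [erase_eq_of_notMem h]; exact hy.1)
    rw [← insert_erase hax, ← insert_erase hay, show x.erase a = y.erase a from hxy]
  rw [key]
  have hstrict : ∑ t ∈ ({s ∈ S | erase s a ∉ S}), #(erase t a)
      < ∑ t ∈ ({s ∈ S | erase s a ∉ S}), #t := by
    apply sum_lt_sum_of_nonempty ⟨s, mem_filter.2 ⟨hs, hes⟩⟩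
    intro i hi
    have hai : a ∈ i := by
      by_contra h
      exact (mem_filter.1 hi).2 (by rw [erase_eq_of_notMem h]; exact (mem_filter.1 hi).1)
    exact card_erase_lt_of_mem hai
  calc _ < ∑ t ∈ {s ∈ S | erase s a ∈ S}, #t + ∑ t ∈ ({s ∈ S | erase s a ∉ S}), #t := by
        omega
    _ = ∑ t ∈ S, #t := by
        rw [← sum_filter_add_sum_filter_not S (fun s => erase s a ∈ S)]

lemma not_lower_exists {S : Finset (Finset X)}
    (h : ¬ ∀ σ ∈ S, ∀ τ ⊆ σ, τ ∈ S) :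
    ∃ s ∈ S, ∃ a ∈ s, s.erase a ∉ S := by
  push_neg at h
  obtain ⟨σ, hσ, τ, hτσ, hτ⟩ := h
  obtain ⟨u, hu, hmin⟩ := exists_min_image {u ∈ σ.powerset | τ ⊆ u ∧ u ∈ S} card
    ⟨σ, by simp [hσ, hτσ]⟩
  simp only [mem_filter, mem_powerset] at hu
  obtain ⟨huσ, hτu, huS⟩ := hu
  have hne : τ ≠ u := fun h => hτ (h ▸ huS)
  have hns : ¬ u ⊆ τ := fun h' => hne (Subset.antisymm hτu h')
  obtain ⟨a, hau, haτ⟩ := not_subset.1 hns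
  refine ⟨u, huS, a, hau, fun hmem => ?_⟩
  have : #u ≤ #(u.erase a) := by
    apply hmin
    simp only [mem_filter, mem_powerset]
    exact ⟨(erase_subset a u).trans huσ, subset_erase.2 ⟨hτu, haτ⟩, hmem⟩
  exact absurd this (not_le.2 (card_erase_lt_of_mem hau))

variable [Fintype X]

lemma shatter_compression_le (a : X) (S : Finset (Finset X)) (m : ℕ) :
    shatter (𝓓 a S) m ≤ shatter S m := by
  apply Finset.sup_le
  intro Y hY
  exact (trace_compression_card_le a S Y).trans (le_sup (f := fun Y => #(S.image (· ∩ Y))) hY)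


end Aux

open Finset FinsetFamily in
/-- **Lemma (Alon, Frankl).** For any finite set system `S` there exists a simplicial
complex `C` (a set system closed under taking subsets) with `|C| = |S|` and
`f_C(m) ≤ f_S(m)` for every `m`. -/
theorem compress_to_complex {X : Type*} [DecidableEq X] [Fintype X]
    (S : Finset (Finset X)) :
    ∃ C : Finset (Finset X),
      (∀ σ ∈ C, ∀ τ ⊆ σ, τ ∈ C) ∧
      C.card = S.card ∧
      ∀ m : ℕ, shatter C m ≤ shatter S m := by
  suffices H : ∀ n (S : Finset (Finset X)), ∑ s ∈ S, #s ≤ n → ∃ C : Finset (Finset X),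
      (∀ σ ∈ C, ∀ τ ⊆ σ, τ ∈ C) ∧ C.card = S.card ∧ ∀ m : ℕ, shatter C m ≤ shatter S m from
    H _ S le_rfl
  intro n
  induction n using Nat.strong_induction_on with
  | _ n IH =>
    intro S hS
    by_cases hlow : ∀ σ ∈ S, ∀ τ ⊆ σ, τ ∈ S
    · exact ⟨S, hlow, rfl, fun _ => le_rfl⟩
    · obtain ⟨s, hs, a, has, hes⟩ := not_lower_exists hlow
      have hlt : ∑ t ∈ 𝓓 a S, #t < n := (sum_compression_lt hs has hes).trans_le hS
      obtain ⟨C, h1, h2, h3⟩ := IH _ hlt (𝓓 a S) le_rfl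
      exact ⟨C, h1, h2.trans (Down.card_compression a S),
        fun m => (h3 m).trans (shatter_compression_le a S m)⟩
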